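/- Let J = [a₁, a₂] be a nondegenerate closed interval and let H ⊆ J be an F_σ set of Lebesgue measure zero. Then there exists a nondecreasing continuous function φ : J → ℝ, nonconstant, with φ'(x) = 0 for Lebesgue-almost every x ∈ J, such that φ(a₁) = a₁, φ(a₂) = a₂, and φ'(x) = 0 for every x ∈ H (derivatives taken relative to J). -/

import Mathlib

open Set MeasureTheory Filter Topology ENNReal

noncomputable section
namespace Stmt1Aux

variable (u : ℕ → Set ℝ)

/-- Spec for the chosen subinterval. -/
def Q (n : ℕ) (cd : ℝ × ℝ) (b : Bool) (q : ℝ × ℝ) : Prop :=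
  (bif b then (cd.1 + cd.2)/2 else cd.1) < q.1 ∧ q.1 < q.2 ∧
    q.2 < (bif b then cd.2 else (cd.1 + cd.2)/2) ∧
    q.2 - q.1 ≤ (cd.2 - cd.1)/3 ∧ Icc q.1 q.2 ∩ u n = ∅

lemma exists_Q {n : ℕ} (hd : Dense (u n)ᶜ) (ho : IsClosed (u n)) {cd : ℝ × ℝ}
    (hcd : cd.1 < cd.2) (b : Bool) : ∃ q, Q u n cd b q := by
  obtain ⟨c, d⟩ := cd
  simp only at hcd
  set l : ℝ := bif b then (c + d)/2 else c with hl
  set r : ℝ := bif b then d else (c + d)/2 with hr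
  have hlr : l < r := by cases b <;> simp [hl, hr] <;> linarith
  obtain ⟨p, hpI, hpc⟩ := hd.inter_open_nonempty _ isOpen_Ioo (nonempty_Ioo.2 hlr)
  have hVo : IsOpen ((u n)ᶜ ∩ Ioo l r) := ho.isOpen_compl.inter isOpen_Ioo
  obtain ⟨ε, hε, hball⟩ := Metric.isOpen_iff.1 hVo p ⟨hpc, hpI⟩
  set δ : ℝ := min (ε/2) ((d - c)/6) with hδ
  have hδ0 : 0 < δ := by
    apply lt_min (by linarith)
    linarith
  have hsub : Icc (p - δ) (p + δ) ⊆ (u n)ᶜ ∩ Ioo l r := by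
    refine subset_trans ?_ hball
    rw [← Real.closedBall_eq_Icc]
    exact Metric.closedBall_subset_ball (by
      calc δ ≤ ε/2 := min_le_left _ _
      _ < ε := by linarith)
  have h1 : p - δ ∈ (u n)ᶜ ∩ Ioo l r := hsub ⟨by linarith, by linarith⟩
  have h2 : p + δ ∈ (u n)ᶜ ∩ Ioo l r := hsub ⟨by linarith, by linarith⟩
  refine ⟨(p - δ, p + δ), h1.2.1, by simp only; linarith, h2.2.2, ?_, ?_⟩
  · simp only
    have : δ ≤ (d - c)/6 := min_le_right _ _
    linarith
  · rw [eq_empty_iff_forall_notMem]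
    rintro z ⟨hz1, hz2⟩
    exact (hsub hz1).1 hz2

open Classical in
/-- Pick a subinterval satisfying `Q` when possible. -/
def nxt (n : ℕ) (cd : ℝ × ℝ) (b : Bool) : ℝ × ℝ :=
  if h : ∃ q, Q u n cd b q then h.choose else cd

lemma nxt_Q {n : ℕ} (hd : Dense (u n)ᶜ) (ho : IsClosed (u n)) {cd : ℝ × ℝ}
    (hcd : cd.1 < cd.2) (b : Bool) : Q u n cd b (nxt u n cd b) := by
  have h := exists_Q u hd ho hcd b
  rw [nxt, dif_pos h]
  exact h.choose_spec

/-- The nested interval scheme. -/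
def It (c₀ d₀ : ℝ) (x : ℕ → Bool) : ℕ → ℝ × ℝ
  | 0 => (c₀, d₀)
  | n + 1 => nxt u n (It c₀ d₀ x n) (x n)

variable {u}
variable {c₀ d₀ : ℝ} (hd : ∀ n, Dense (u n)ᶜ) (ho : ∀ n, IsClosed (u n)) (h₀ : c₀ < d₀)
  {x y : ℕ → Bool}

section
include hd ho h₀

lemma It_lt (x : ℕ → Bool) : ∀ n, (It u c₀ d₀ x n).1 < (It u c₀ d₀ x n).2
  | 0 => h₀
  | n + 1 => (nxt_Q u (hd n) (ho n) (It_lt x n) (x n)).2.1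

lemma It_Q (x : ℕ → Bool) (n : ℕ) :
    Q u n (It u c₀ d₀ x n) (x n) (It u c₀ d₀ x (n + 1)) :=
  nxt_Q u (hd n) (ho n) (It_lt hd ho h₀ x n) (x n)

lemma It_fst_lt (x : ℕ → Bool) (n : ℕ) :
    (It u c₀ d₀ x n).1 < (It u c₀ d₀ x (n + 1)).1 := by
  have h := It_Q hd ho h₀ x n
  have h2 := It_lt hd ho h₀ x n
  rcases Bool.eq_false_or_eq_true (x n) with hb | hb <;> rw [hb] at h <;>
    simp only [Q, Bool.cond_false, Bool.cond_true] at h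
  · linarith [h.1]
  · exact h.1

lemma It_snd_lt (x : ℕ → Bool) (n : ℕ) :
    (It u c₀ d₀ x (n + 1)).2 < (It u c₀ d₀ x n).2 := by
  have h := It_Q hd ho h₀ x n
  have h2 := It_lt hd ho h₀ x n
  rcases Bool.eq_false_or_eq_true (x n) with hb | hb <;> rw [hb] at h <;>
    simp only [Q, Bool.cond_false, Bool.cond_true] at h
  · exact h.2.2.1
  · linarith [h.2.2.1]

lemma It_fst_mono (x : ℕ → Bool) : Monotone fun n => (It u c₀ d₀ x n).1 :=
  (strictMono_nat_of_lt_succ (It_fst_lt hd ho h₀ x)).monotone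

lemma It_snd_anti (x : ℕ → Bool) : Antitone fun n => (It u c₀ d₀ x n).2 :=
  (strictAnti_nat_of_succ_lt (It_snd_lt hd ho h₀ x)).antitone

lemma It_cross (x : ℕ → Bool) (m n : ℕ) : (It u c₀ d₀ x m).1 ≤ (It u c₀ d₀ x n).2 := by
  rcases le_total m n with h | h
  · exact (It_fst_mono hd ho h₀ x h).trans (It_lt hd ho h₀ x n).le
  · exact (It_lt hd ho h₀ x m).le.trans (It_snd_anti hd ho h₀ x h)

end

/-- The Cantor-type map. -/
def gf (u : ℕ → Set ℝ) (c₀ d₀ : ℝ) (x : ℕ → Bool) : ℝ := ⨆ n, (It u c₀ d₀ x n).1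

section
include hd ho h₀

lemma gf_bdd (x : ℕ → Bool) : BddAbove (range fun n => (It u c₀ d₀ x n).1) :=
  ⟨d₀, by rintro - ⟨n, rfl⟩; exact It_cross hd ho h₀ x n 0⟩

lemma gf_mem (x : ℕ → Bool) (n : ℕ) :
    gf u c₀ d₀ x ∈ Icc (It u c₀ d₀ x n).1 (It u c₀ d₀ x n).2 :=
  ⟨le_ciSup (gf_bdd hd ho h₀ x) n, ciSup_le fun m => It_cross hd ho h₀ x m n⟩

end

lemma It_congr (c₀ d₀ : ℝ) {n : ℕ} (h : ∀ i < n, x i = y i) :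
    It u c₀ d₀ x n = It u c₀ d₀ y n := by
  induction n with
  | zero => rfl
  | succ k ih =>
    show nxt u k (It u c₀ d₀ x k) (x k) = nxt u k (It u c₀ d₀ y k) (y k)
    rw [ih fun i hi => h i (hi.trans (Nat.lt_succ_self k)), h k (Nat.lt_succ_self k)]

section
include hd ho h₀

lemma It_len (x : ℕ → Bool) : ∀ n, (It u c₀ d₀ x n).2 - (It u c₀ d₀ x n).1 ≤ (d₀ - c₀)/3 ^ n
  | 0 => by simp [It]
  | n + 1 => by
    have h := (It_Q hd ho h₀ x n).2.2.2.1
    have h2 := It_len x n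
    rw [pow_succ, ← div_div]
    exact h.trans (by linarith)

lemma It_avoid (x : ℕ → Bool) (n : ℕ) :
    Icc (It u c₀ d₀ x (n + 1)).1 (It u c₀ d₀ x (n + 1)).2 ∩ u n = ∅ :=
  (It_Q hd ho h₀ x n).2.2.2.2

lemma gf_not_mem (x : ℕ → Bool) (n : ℕ) : gf u c₀ d₀ x ∉ u n := fun h => by
  have := It_avoid hd ho h₀ x n
  rw [eq_empty_iff_forall_notMem] at this
  exact this _ ⟨gf_mem hd ho h₀ x (n + 1), h⟩

lemma gf_mem_Ioo (x : ℕ → Bool) : gf u c₀ d₀ x ∈ Ioo c₀ d₀ := by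
  have h1 := gf_mem hd ho h₀ x 1
  have h2 := It_fst_lt hd ho h₀ x 0
  have h3 := It_snd_lt hd ho h₀ x 0
  simp only [It] at h2 h3
  exact ⟨lt_of_lt_of_le h2 h1.1, lt_of_le_of_lt h1.2 h3⟩

lemma gf_sep {x y : ℕ → Bool} {n : ℕ} (hIt : It u c₀ d₀ x n = It u c₀ d₀ y n)
    (hx : x n = false) (hy : y n = true) : gf u c₀ d₀ x < gf u c₀ d₀ y := by
  have hQx := It_Q hd ho h₀ x n
  have hQy := It_Q hd ho h₀ y n
  rw [hx] at hQx; rw [hy] at hQy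
  simp only [Q, Bool.cond_false, Bool.cond_true] at hQx hQy
  have h1 := (gf_mem hd ho h₀ x (n + 1)).2
  have h2 := (gf_mem hd ho h₀ y (n + 1)).1
  rw [hIt] at hQx
  linarith [hQx.2.2.1, hQy.1]

lemma gf_inj : Function.Injective (gf u c₀ d₀) := by
  intro x y hxy
  by_contra hne
  have hex : ∃ n, x n ≠ y n := by
    by_contra h
    push_neg at h
    exact hne (funext h)
  set n := Nat.find hex with hn
  have hmin : ∀ i < n, x i = y i := fun i hi => by
    by_contra h
    exact Nat.find_min hex hi h
  have hIt : It u c₀ d₀ x n = It u c₀ d₀ y n := It_congr c₀ d₀ hmin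
  have hd1 : x n ≠ y n := Nat.find_spec hex
  rcases Bool.eq_false_or_eq_true (x n) with hx | hx <;>
    rcases Bool.eq_false_or_eq_true (y n) with hy | hy
  · exact hd1 (hx.trans hy.symm)
  · exact absurd hxy.symm (gf_sep hd ho h₀ hIt.symm hy hx).ne
  · exact absurd hxy (gf_sep hd ho h₀ hIt hx hy).ne
  · exact hd1 (hx.trans hy.symm)

end

section
include hd ho h₀

lemma gf_cont : Continuous (gf u c₀ d₀) := by
  rw [continuous_iff_continuousAt]
  intro x
  rw [ContinuousAt, Metric.tendsto_nhds]
  intro ε hε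
  obtain ⟨n, hn⟩ : ∃ n : ℕ, (d₀ - c₀)/3 ^ n < ε := by
    have h3 : Tendsto (fun n : ℕ => (d₀ - c₀) * (1/3:ℝ) ^ n) atTop (𝓝 0) := by
      simpa using (tendsto_pow_atTop_nhds_zero_of_lt_one (by norm_num : (0:ℝ) ≤ 1/3)
        (by norm_num)).const_mul (d₀ - c₀)
    have h3' : Tendsto (fun n : ℕ => (d₀ - c₀)/3 ^ n) atTop (𝓝 0) :=
      h3.congr fun n => by rw [one_div, inv_pow, div_eq_mul_inv]
    exact (h3'.eventually (gt_mem_nhds hε)).exists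
  have hV : ∀ᶠ y : ℕ → Bool in 𝓝 x, ∀ i ∈ Iio n, y i = x i := by
    refine (eventually_all_finite (finite_Iio n)).2 fun i _ => ?_
    exact (continuous_apply i).tendsto x ((isOpen_discrete {x i}).mem_nhds rfl)
  filter_upwards [hV] with y hy
  have hIt : It u c₀ d₀ y n = It u c₀ d₀ x n := It_congr c₀ d₀ fun i hi => hy i hi
  have h1 := gf_mem hd ho h₀ y n
  rw [hIt] at h1
  have h2 := gf_mem hd ho h₀ x n
  have hl := It_len hd ho h₀ x n
  rw [Real.dist_eq]
  have habs : |gf u c₀ d₀ y - gf u c₀ d₀ x| ≤ (d₀ - c₀)/3 ^ n := by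
    rw [abs_sub_le_iff]
    constructor <;> [linarith [h1.1, h1.2, h2.1, h2.2]; linarith [h1.1, h1.2, h2.1, h2.2]]
  exact habs.trans_lt hn

lemma volume_range_gf : volume (Set.range (gf u c₀ d₀)) = 0 := by
  have key : ∀ n : ℕ, volume (Set.range (gf u c₀ d₀)) ≤
      ENNReal.ofReal ((d₀ - c₀) * (2/3) ^ n) := by
    intro n
    set ext : (Fin n → Bool) → (ℕ → Bool) :=
      fun s i => if h : i < n then s ⟨i, h⟩ else false with hext
    have cover : Set.range (gf u c₀ d₀) ⊆
        ⋃ s : Fin n → Bool, Icc (It u c₀ d₀ (ext s) n).1 (It u c₀ d₀ (ext s) n).2 := by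
      rintro - ⟨x, rfl⟩
      refine mem_iUnion.2 ⟨fun i => x i, ?_⟩
      have : It u c₀ d₀ (ext fun i : Fin n => x i) n = It u c₀ d₀ x n :=
        It_congr c₀ d₀ fun i hi => by simp [hext, hi]
      rw [this]
      exact gf_mem hd ho h₀ x n
    refine (measure_mono cover).trans ((measure_iUnion_le _).trans ?_)
    rw [tsum_fintype]
    have hbound : ∀ s : Fin n → Bool,
        volume (Icc (It u c₀ d₀ (ext s) n).1 (It u c₀ d₀ (ext s) n).2) ≤
          ENNReal.ofReal ((d₀ - c₀)/3 ^ n) := fun s => by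
      rw [Real.volume_Icc]
      exact ENNReal.ofReal_le_ofReal (It_len hd ho h₀ _ n)
    refine (Finset.sum_le_sum fun s _ => hbound s).trans ?_
    rw [Finset.sum_const, Finset.card_univ]
    have hcard : Fintype.card (Fin n → Bool) = 2 ^ n := by simp
    rw [hcard, nsmul_eq_mul]
    have h2n : ((2 ^ n : ℕ) : ℝ≥0∞) = ENNReal.ofReal ((2:ℝ) ^ n) := by
      rw [ENNReal.ofReal_pow (by norm_num : (0:ℝ) ≤ 2), ENNReal.ofReal_ofNat]
      push_cast
      ring
    rw [h2n, ← ENNReal.ofReal_mul (by positivity)]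
    refine ENNReal.ofReal_le_ofReal (le_of_eq ?_)
    rw [div_pow]
    ring
  have ht : Tendsto (fun n : ℕ => ENNReal.ofReal ((d₀ - c₀) * (2/3) ^ n)) atTop (𝓝 0) := by
    rw [← ENNReal.ofReal_zero]
    apply ENNReal.tendsto_ofReal
    simpa using (tendsto_pow_atTop_nhds_zero_of_lt_one (by norm_num : (0:ℝ) ≤ 2/3)
      (by norm_num)).const_mul (d₀ - c₀)
  have hle : volume (Set.range (gf u c₀ d₀)) ≤ 0 :=
    le_of_tendsto_of_tendsto' tendsto_const_nhds ht key
  exact le_antisymm hle zero_le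

end

instance : (𝓝[≠] (0 : ℕ → ZMod 2)).NeBot := by
  have hseq : Tendsto (fun n : ℕ => (Pi.single n (1 : ZMod 2) : ℕ → ZMod 2)) atTop (𝓝 0) := by
    rw [tendsto_pi_nhds]
    intro i
    have heq : (fun n : ℕ => (Pi.single n (1:ZMod 2) : ℕ → ZMod 2) i) =ᶠ[atTop]
        fun _ => (0 : ZMod 2) := by
      filter_upwards [eventually_gt_atTop i] with n hn
      exact Pi.single_eq_of_ne (by omega) 1
    rw [tendsto_congr' heq]
    exact tendsto_const_nhds
  have h2 : Tendsto (fun n : ℕ => (Pi.single n (1:ZMod 2) : ℕ → ZMod 2)) atTop (𝓝[≠] 0) := by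
    refine tendsto_nhdsWithin_of_tendsto_nhds_of_eventually_within _ hseq
      (Eventually.of_forall fun n => ?_)
    intro h
    have h3 := congrFun h n
    rw [Pi.single_eq_same] at h3
    exact (by decide : (1 : ZMod 2) ≠ 0) h3
  exact h2.neBot

lemma exists_K_mu (u : ℕ → Set ℝ) (ho : ∀ n, IsClosed (u n)) (hd : ∀ n, Dense (u n)ᶜ)
    {a₁ a₂ : ℝ} (hab : a₁ < a₂) :
    ∃ (K : Set ℝ) (μ : Measure ℝ), IsCompact K ∧ K ⊆ Ioo a₁ a₂ ∧ (∀ n, Disjoint K (u n)) ∧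
      volume K = 0 ∧ IsProbabilityMeasure μ ∧ NoAtoms μ ∧ μ Kᶜ = 0 := by
  set c₀ : ℝ := a₁ + (a₂ - a₁)/4 with hc₀
  set d₀ : ℝ := a₂ - (a₂ - a₁)/4 with hd₀
  have h₀ : c₀ < d₀ := by rw [hc₀, hd₀]; linarith
  set σ : (ℕ → ZMod 2) → (ℕ → Bool) := fun z n => finTwoEquiv (z n) with hσdef
  set m : (ℕ → ZMod 2) → ℝ := fun z => gf u c₀ d₀ (σ z) with hm
  have hσsurj : Function.Surjective σ := fun x =>
    ⟨fun n => finTwoEquiv.symm (x n), by funext n; simp [hσdef]⟩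
  have hσinj : Function.Injective σ := fun z w h =>
    funext fun n => finTwoEquiv.injective (congrFun h n)
  have hminj : Function.Injective m := (gf_inj hd ho h₀).comp hσinj
  have hmcont : Continuous m := (gf_cont hd ho h₀).comp
    (continuous_pi fun n => (continuous_of_discreteTopology).comp (continuous_apply n))
  set K : Set ℝ := Set.range m with hK
  have hKr : K = Set.range (gf u c₀ d₀) := hσsurj.range_comp (gf u c₀ d₀)
  have hKcompact : IsCompact K := isCompact_range hmcont
  set ha : Measure (ℕ → ZMod 2) := Measure.addHaar with hha
  haveI : NullSingletonClass ha := by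
    rw [hha]; exact MeasureTheory.Measure.IsAddHaarMeasure.nullSingletonClass _
  have hfin : ha univ ≠ ⊤ := (isCompact_univ.measure_lt_top).ne
  have hpos : ha univ ≠ 0 := (isOpen_univ.measure_pos ha univ_nonempty).ne'
  set P : Measure (ℕ → ZMod 2) := (ha univ)⁻¹ • ha with hP
  have hPprob : IsProbabilityMeasure P :=
    ⟨by rw [hP, Measure.smul_apply, smul_eq_mul, ENNReal.inv_mul_cancel hpos hfin]⟩
  have hPnoatoms : NullSingletonClass P :=
    ⟨fun z => by rw [hP, Measure.smul_apply, measure_singleton, smul_eq_mul, mul_zero]⟩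
  set μ : Measure ℝ := P.map m with hμ
  haveI := hPprob
  haveI := hPnoatoms
  have hμprob : IsProbabilityMeasure μ :=
    Measure.isProbabilityMeasure_map hmcont.measurable.aemeasurable
  have hμnoatoms : NoAtoms μ := by
    refine ⟨fun x => ?_⟩
    rw [hμ, Measure.map_apply hmcont.measurable (measurableSet_singleton x)]
    have hsub : (m ⁻¹' {x}).Subsingleton := fun a ha' b hb' =>
      hminj ((mem_singleton_iff.1 ha').trans (mem_singleton_iff.1 hb').symm)
    exact hsub.countable.measure_zero P
  have hμKc : μ Kᶜ = 0 := by
    rw [hμ, Measure.map_apply hmcont.measurable hKcompact.isClosed.measurableSet.compl]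
    have : m ⁻¹' Kᶜ = ∅ := eq_empty_iff_forall_notMem.2 fun z hz => hz (mem_range_self z)
    rw [this, measure_empty]
  refine ⟨K, μ, hKcompact, ?_, ?_, ?_, hμprob, hμnoatoms, hμKc⟩
  · rw [hKr]
    rintro - ⟨x, rfl⟩
    have h1 := gf_mem_Ioo hd ho h₀ x
    have h2 : a₁ < c₀ := by rw [hc₀]; linarith
    have h3 : d₀ < a₂ := by rw [hd₀]; linarith
    exact ⟨h2.trans h1.1, h1.2.trans h3⟩
  · intro n
    rw [hKr, disjoint_left]
    rintro - ⟨x, rfl⟩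
    exact gf_not_mem hd ho h₀ x n
  · rw [hKr]
    exact volume_range_gf hd ho h₀

end Stmt1Aux

end

open Stmt1Aux ProbabilityTheory

theorem stmt1 (a₁ a₂ : ℝ) (hab : a₁ < a₂) (H : Set ℝ) (hH : H ⊆ Set.Icc a₁ a₂)
    (hFσ : ∃ u : ℕ → Set ℝ, (∀ n, IsClosed (u n)) ∧ H = ⋃ n, u n)
    (hnull : volume H = 0) :
    ∃ φ : ℝ → ℝ, MonotoneOn φ (Set.Icc a₁ a₂) ∧ ContinuousOn φ (Set.Icc a₁ a₂) ∧
      φ a₁ = a₁ ∧ φ a₂ = a₂ ∧ ¬ (∀ x ∈ Set.Icc a₁ a₂, ∀ y ∈ Set.Icc a₁ a₂, φ x = φ y) ∧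
      (∀ᵐ x, x ∈ Set.Icc a₁ a₂ → HasDerivWithinAt φ 0 (Set.Icc a₁ a₂) x) ∧
      (∀ x ∈ H, HasDerivWithinAt φ 0 (Set.Icc a₁ a₂) x) := by
  obtain ⟨u, ho, hHu⟩ := hFσ
  have hun : ∀ n, volume (u n) = 0 := fun n =>
    measure_mono_null (hHu ▸ subset_iUnion u n) hnull
  have hd : ∀ n, Dense (u n)ᶜ := by
    intro n
    rw [← interior_eq_empty_iff_dense_compl]
    by_contra h
    have hpos := isOpen_interior.measure_pos volume (nonempty_iff_ne_empty.2 h)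
    exact absurd (measure_mono_null interior_subset (hun n)) hpos.ne'
  obtain ⟨K, μ, hKcomp, hKIoo, hKdisj, hKvol, hμprob, hμnoatoms, hμKc⟩ :=
    exists_K_mu u ho hd hab
  haveI := hμprob
  haveI : NullSingletonClass μ := hμnoatoms
  set f : StieltjesFunction ℝ := cdf μ with hf
  -- values at the endpoints
  have hIic1 : μ (Iic a₁) = 0 := by
    refine measure_mono_null ?_ hμKc
    intro x hx hxK
    exact absurd (hKIoo hxK).1 (not_lt.2 hx)
  have hIic2 : μ (Iic a₂) = 1 := by
    have hIoi : μ (Ioi a₂) = 0 := by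
      refine measure_mono_null ?_ hμKc
      intro x hx hxK
      exact absurd (hKIoo hxK).2 (not_lt.2 hx.le)
    have h1 : (1 : ℝ≥0∞) = μ (Iic a₂ ∪ Ioi a₂) := by rw [Iic_union_Ioi, measure_univ]
    refine le_antisymm prob_le_one ?_
    calc (1 : ℝ≥0∞) = μ (Iic a₂ ∪ Ioi a₂) := h1
      _ ≤ μ (Iic a₂) + μ (Ioi a₂) := measure_union_le _ _
      _ = μ (Iic a₂) := by rw [hIoi, add_zero]
  have hfa₁ : f a₁ = 0 := by rw [hf, cdf_eq_real, measureReal_def, hIic1, ENNReal.toReal_zero]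
  have hfa₂ : f a₂ = 1 := by rw [hf, cdf_eq_real, measureReal_def, hIic2, ENNReal.toReal_one]
  -- continuity of f
  have hfc : Continuous f := by
    rw [continuous_iff_continuousAt]
    intro x
    rw [f.mono.continuousAt_iff_leftLim_eq_rightLim, f.rightLim_eq]
    have hs := f.measure_singleton x
    rw [hf, measure_cdf, measure_singleton, eq_comm, ENNReal.ofReal_eq_zero] at hs
    have hle : Function.leftLim (⇑(cdf μ)) x ≤ cdf μ x := (cdf μ).mono.leftLim_le le_rfl
    rw [hf]
    linarith
  set φ : ℝ → ℝ := fun t => a₁ + (a₂ - a₁) * f t with hφ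
  have hφmono : Monotone φ := fun s t hst => by
    have := f.mono hst
    have h2 : (0:ℝ) ≤ a₂ - a₁ := by linarith
    simp only [hφ]
    nlinarith
  have hφa₁ : φ a₁ = a₁ := by rw [hφ]; simp [hfa₁]
  have hφa₂ : φ a₂ = a₂ := by simp only [hφ]; rw [hfa₂]; ring
  -- singularity
  have hsing : μ ⟂ₘ volume := ⟨Kᶜ, hKcomp.isClosed.measurableSet.compl, hμKc,
    by rw [compl_compl]; exact hKvol⟩
  have hrn : μ.rnDeriv volume =ᵐ[volume] 0 := (Measure.rnDeriv_eq_zero μ volume).2 hsing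
  have hae : ∀ᵐ x, HasDerivAt φ 0 x := by
    have h1 := f.ae_hasDerivAt
    filter_upwards [h1, hrn] with x hx1 hx2
    rw [hf, measure_cdf] at hx1
    rw [hx2] at hx1
    simp only [Pi.zero_apply, ENNReal.toReal_zero] at hx1
    have h3 : HasDerivAt (fun t => a₁ + (a₂ - a₁) * (cdf μ) t) ((a₂ - a₁) * 0) x :=
      (hx1.const_mul (a₂ - a₁)).const_add a₁
    rw [mul_zero] at h3
    exact h3
  -- derivative zero at points of H
  have hder : ∀ x ∈ H, HasDerivAt φ 0 x := by
    intro x hx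
    have hxK : x ∉ K := by
      rw [hHu, mem_iUnion] at hx
      obtain ⟨n, hn⟩ := hx
      exact fun hxK => (hKdisj n).ne_of_mem hxK hn rfl
    obtain ⟨ε, hε, hball⟩ := Metric.isOpen_iff.1 hKcomp.isClosed.isOpen_compl x hxK
    have hconst : ∀ y ∈ Metric.ball x ε, ∀ z ∈ Metric.ball x ε, y ≤ z → f z = f y := by
      intro y hy z hz hyz
      have hIoc : μ (Ioc y z) = 0 := by
        refine measure_mono_null (fun t ht => hball ?_) hμKc
        rw [Real.ball_eq_Ioo] at hy hz ⊢
        exact ⟨hy.1.trans ht.1, lt_of_le_of_lt ht.2 hz.2⟩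
      have hm := f.measure_Ioc y z
      rw [hf, measure_cdf, hIoc, eq_comm, ENNReal.ofReal_eq_zero] at hm
      have := f.mono hyz
      rw [hf] at this ⊢
      linarith
    have hev : φ =ᶠ[𝓝 x] fun _ => φ x := by
      filter_upwards [Metric.ball_mem_nhds x hε] with y hy
      have hxball : x ∈ Metric.ball x ε := Metric.mem_ball_self hε
      rcases le_total y x with h | h
      · rw [hφ]; simp only; rw [hconst y hy x hxball h]
      · rw [hφ]; simp only; rw [hconst x hxball y hy h]
    exact (hasDerivAt_const x (φ x)).congr_of_eventuallyEq hev
  refine ⟨φ, hφmono.monotoneOn _, ?_, hφa₁, hφa₂, ?_, ?_, ?_⟩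
  · exact (continuous_const.add (continuous_const.mul hfc)).continuousOn
  · intro hcon
    have := hcon a₁ (left_mem_Icc.2 hab.le) a₂ (right_mem_Icc.2 hab.le)
    rw [hφa₁, hφa₂] at this
    exact hab.ne this
  · filter_upwards [hae] with x hx _
    exact hx.hasDerivWithinAt
  · exact fun x hx => (hder x hx).hasDerivWithinAt
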